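/- Let G be the group ⟨x_i (i ∈ ℤ) | w(x_i, ..., x_{i+k-1}) = 1 for all i ∈ ℤ⟩, where in the word w the last generator x_k appears exactly once (with exponent ±1). Then for every n ≥ k, the generator x_n lies in the subgroup generated by x_1, ..., x_{k-1}; consequently the subgroup ⟨x_j : j ≥ 1⟩ of G is generated by the finite set {x_1, ..., x_{k-1}}. -/

import Mathlib

/-- The set of relators `w(x_m, x_{m+1}, …, x_{m+k-1})`, one for every `m ∈ ℤ`,
in the free group on generators `{x_i : i ∈ ℤ}`. -/
def shiftRels (k : ℕ) (w : FreeGroup (Fin k)) : Set (FreeGroup ℤ) :=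
  {r | ∃ m : ℤ, r = FreeGroup.lift (fun j : Fin k => FreeGroup.of (m + (j.1 : ℤ))) w}

lemma filter_len_one {α : Type*} (p : α → Bool) :
    ∀ l : List α, (l.filter p).length = 1 →
      ∃ a x c, l = a ++ x :: c ∧ p x ∧ (∀ y ∈ a, ¬ p y) ∧ (∀ y ∈ c, ¬ p y) := by
  intro l
  induction l with
  | nil => simp
  | cons z l ih =>
    intro h
    by_cases hp : p z
    · refine ⟨[], z, l, by simp, hp, by simp, ?_⟩
      rw [List.filter_cons_of_pos hp] at h
      simp only [List.length_cons, Nat.succ_inj] at h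
      intro y hy hpy
      have := List.length_pos_iff.mpr (List.ne_nil_of_mem (List.mem_filter.mpr ⟨hy, hpy⟩))
      omega
    · rw [List.filter_cons_of_neg (by simpa using hp)] at h
      obtain ⟨a, x, c, h1, h2, h3, h4⟩ := ih h
      exact ⟨z :: a, x, c, by simp [h1], h2, by simpa [hp] using h3, h4⟩

lemma step_lemma (k : ℕ) (hk : 2 ≤ k) (w : FreeGroup (Fin k)) (hlt : k - 1 < k)
    (honce : (w.toWord.filter (fun p => p.1 = (⟨k - 1, hlt⟩ : Fin k))).length = 1)
    (m : ℤ) (H : Subgroup (PresentedGroup (shiftRels k w)))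
    (hH : ∀ j : ℤ, m ≤ j → j ≤ m + (k : ℤ) - 2 →
      (PresentedGroup.of j : PresentedGroup (shiftRels k w)) ∈ H) :
    (PresentedGroup.of (m + (k : ℤ) - 1) : PresentedGroup (shiftRels k w)) ∈ H := by
  set last : Fin k := ⟨k - 1, by omega⟩ with hlast
  set ψ : Fin k → PresentedGroup (shiftRels k w) :=
    fun j => PresentedGroup.of (m + (j.1 : ℤ)) with hψ
  -- the relator maps to 1
  have hrel : FreeGroup.lift ψ w = 1 := by
    have hcomp : (PresentedGroup.mk (shiftRels k w)).comp
        (FreeGroup.lift (fun j : Fin k => FreeGroup.of (m + (j.1 : ℤ)))) = FreeGroup.lift ψ := by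
      apply FreeGroup.ext_hom
      intro a
      simp [hψ, PresentedGroup.of]
    have h1 : PresentedGroup.mk (shiftRels k w)
        (FreeGroup.lift (fun j : Fin k => FreeGroup.of (m + (j.1 : ℤ))) w) = 1 := by
      have : (FreeGroup.lift (fun j : Fin k => FreeGroup.of (m + (j.1 : ℤ))) w) ∈
          Subgroup.normalClosure (shiftRels k w) :=
        Subgroup.subset_normalClosure ⟨m, rfl⟩
      exact (QuotientGroup.eq_one_iff _).mpr this
    rw [← hcomp]
    exact h1
  -- decompose the word
  obtain ⟨a, x, c, hdec, hx, ha, hc⟩ :=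
    filter_len_one (fun p : Fin k × Bool => p.1 = last) w.toWord honce
  have hprod : FreeGroup.lift ψ w =
      ((a.map fun p => cond p.2 (ψ p.1) (ψ p.1)⁻¹).prod) *
      (cond x.2 (ψ x.1) (ψ x.1)⁻¹) *
      ((c.map fun p => cond p.2 (ψ p.1) (ψ p.1)⁻¹).prod) := by
    have h0 : FreeGroup.lift ψ w = FreeGroup.lift ψ (FreeGroup.mk w.toWord) := by
      rw [FreeGroup.mk_toWord]
    rw [h0, FreeGroup.lift_mk, hdec]
    simp [List.prod_append, mul_assoc]
  have hmemlist : ∀ p : Fin k × Bool, p.1 ≠ last → (cond p.2 (ψ p.1) (ψ p.1)⁻¹) ∈ H := by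
    rintro ⟨i, b⟩ hne
    have hi : (i : ℕ) ≤ k - 2 := by
      have h1 : (i : ℕ) < k := i.2
      have h2 : (i : ℕ) ≠ k - 1 := fun h => hne (by simp [hlast, Fin.ext_iff, h])
      omega
    have : ψ i ∈ H := hH _ (by omega) (by omega)
    cases b <;> simpa using this
  have hPa : ((a.map fun p => cond p.2 (ψ p.1) (ψ p.1)⁻¹).prod) ∈ H := by
    apply Subgroup.list_prod_mem
    intro g hg
    obtain ⟨p, hp, rfl⟩ := List.mem_map.mp hg
    exact hmemlist p (by simpa using ha p hp)
  have hPc : ((c.map fun p => cond p.2 (ψ p.1) (ψ p.1)⁻¹).prod) ∈ H := by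
    apply Subgroup.list_prod_mem
    intro g hg
    obtain ⟨p, hp, rfl⟩ := List.mem_map.mp hg
    exact hmemlist p (by simpa using hc p hp)
  rw [hrel] at hprod
  have hxlast : x.1 = last := by simpa using hx
  set A := ((a.map fun p => cond p.2 (ψ p.1) (ψ p.1)⁻¹).prod) with hA
  set C := ((c.map fun p => cond p.2 (ψ p.1) (ψ p.1)⁻¹).prod) with hC
  set T := (cond x.2 (ψ x.1) (ψ x.1)⁻¹) with hT
  have ht : T ∈ H := by
    have h := hprod.symm
    have h2 : T = A⁻¹ * (A * T * C) * C⁻¹ := by group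
    rw [h, mul_one] at h2
    rw [h2]
    exact H.mul_mem (H.inv_mem hPa) (H.inv_mem hPc)
  have hψlast : ψ x.1 ∈ H := by
    cases hb : x.2
    · rw [hT, hb] at ht; simpa using H.inv_mem ht
    · rw [hT, hb] at ht; simpa using ht
  have : ψ x.1 = PresentedGroup.of (m + (k : ℤ) - 1) := by
    rw [hxlast]
    simp only [hψ, hlast]
    congr 1
    omega
  rwa [this] at hψlast

/-- Let `G = ⟨x_i (i ∈ ℤ) ∣ w(x_i, …, x_{i+k-1}) = 1 ∀ i⟩`, where the last
generator `x_k` occurs exactly once in `w` (necessarily with exponent `±1`).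
Then every generator `x_n` with `n ≥ k` lies in the subgroup generated by
`x_1, …, x_{k-1}`; consequently the subgroup `⟨x_j : j ≥ 1⟩` is generated by the
finite set `{x_1, …, x_{k-1}}`. -/
theorem last_letter_once_finitely_generated (k : ℕ) (hk : 2 ≤ k)
    (w : FreeGroup (Fin k))
    (honce : (w.toWord.filter (fun p => p.1 = (⟨k - 1, by omega⟩ : Fin k))).length = 1) :
    (∀ n : ℤ, (k : ℤ) ≤ n →
      (PresentedGroup.of n : PresentedGroup (shiftRels k w)) ∈
        Subgroup.closure {g | ∃ j : ℤ, 1 ≤ j ∧ j ≤ (k : ℤ) - 1 ∧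
          g = (PresentedGroup.of j : PresentedGroup (shiftRels k w))}) ∧
    Subgroup.closure {g | ∃ j : ℤ, 1 ≤ j ∧
        g = (PresentedGroup.of j : PresentedGroup (shiftRels k w))} =
      Subgroup.closure {g | ∃ j : ℤ, 1 ≤ j ∧ j ≤ (k : ℤ) - 1 ∧
        g = (PresentedGroup.of j : PresentedGroup (shiftRels k w))} := by
  set S : Set (PresentedGroup (shiftRels k w)) :=
    {g | ∃ j : ℤ, 1 ≤ j ∧ j ≤ (k : ℤ) - 1 ∧
      g = (PresentedGroup.of j : PresentedGroup (shiftRels k w))} with hS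
  have key : ∀ N : ℕ, ∀ n : ℤ, 1 ≤ n → n ≤ (N : ℤ) →
      (PresentedGroup.of n : PresentedGroup (shiftRels k w)) ∈ Subgroup.closure S := by
    intro N
    induction N with
    | zero => intro n h1 h2; omega
    | succ N ih =>
      intro n h1 h2
      by_cases hn : n ≤ (N : ℤ)
      · exact ih n h1 hn
      · by_cases hsm : n ≤ (k : ℤ) - 1
        · exact Subgroup.subset_closure ⟨n, h1, hsm, rfl⟩
        · have hnk : (k : ℤ) ≤ n := by omega
          have hstep := step_lemma k hk w (by omega) honce (n - (k : ℤ) + 1) (Subgroup.closure S)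
            (fun j hj1 hj2 => ih j (by omega) (by omega))
          have harg : n - (k : ℤ) + 1 + (k : ℤ) - 1 = n := by omega
          rwa [harg] at hstep
  constructor
  · intro n hn
    exact key n.toNat n (by omega) (by omega)
  · apply le_antisymm
    · rw [Subgroup.closure_le]
      rintro g ⟨j, hj, rfl⟩
      exact key j.toNat j hj (by omega)
    · apply Subgroup.closure_mono
      rintro g ⟨j, hj1, hj2, rfl⟩
      exact ⟨j, hj1, rfl⟩
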